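/- One-dimensional spline extension: for m ≥ 1 and Ω ∈ A¹_{m−1}, every spline f ∈ S_m(T) on Ω (C^{m−1}, degree-m piecewise polynomial on cells) extends to a spline f̃ of degree m and smoothness C^{m−1} defined on all of ℝ with respect to the infinite grid T', with f̃|_Ω = f. -/

import Mathlib

open Set

noncomputable section

/-- The 1D domain formed by the unit cells `[k, k+1]`, `k ∈ S`. -/
def cellU1 (S : Finset ℤ) : Set ℝ := ⋃ k ∈ S, Set.Icc (k : ℝ) (k + 1)

/-- The 1D admissibility class `A¹_k`: between any two neighboring connected components
there are more than `k` cells. -/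
def Adm1 (k : ℤ) (A : Set ℤ) : Prop :=
  ∀ a b : ℤ, a ∈ A → b ∈ A → a < b → (∀ c : ℤ, a < c → c < b → c ∉ A) →
    b = a + 1 ∨ k < b - a - 1

open Filter Polynomial

lemma maxpow_contDiff : ∀ n : ℕ, ContDiff ℝ (n : WithTop ℕ∞) (fun x : ℝ => max x 0 ^ (n+1)) := by
  intro n
  induction n with
  | zero =>
    rw [Nat.cast_zero, contDiff_zero]
    simpa using ((continuous_id (X := ℝ)).max (continuous_const (y := (0:ℝ)))).pow 1
  | succ n IH =>
    have hd : ∀ x : ℝ, HasDerivAt (fun x : ℝ => max x 0 ^ (n+2))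
        ((n+2 : ℝ) * max x 0 ^ (n+1)) x := by
      intro x
      rcases lt_trichotomy x 0 with hx | hx | hx
      · have hev : (fun x : ℝ => max x 0 ^ (n+2)) =ᶠ[nhds x] (fun _ => (0:ℝ)) := by
          filter_upwards [Iio_mem_nhds hx] with y hy
          have : y < 0 := hy
          simp [max_eq_right this.le]
        have h0 : HasDerivAt (fun _ : ℝ => (0:ℝ)) 0 x := hasDerivAt_const x 0
        have h2 := h0.congr_of_eventuallyEq hev
        simpa [max_eq_right hx.le] using h2
      · subst hx
        rw [hasDerivAt_iff_tendsto_slope]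
        have key : ∀ y : ℝ, y ≠ 0 → ‖slope (fun x : ℝ => max x 0 ^ (n+2)) 0 y‖ ≤ |y| ^ (n+1) := by
          intro y hy
          rw [slope_def_field]
          have h00 : max (0:ℝ) 0 ^ (n+2) = 0 := by simp
          rw [h00]
          have hmax : max y 0 ≤ |y| := max_le (le_abs_self y) (abs_nonneg y)
          have hmax0 : (0:ℝ) ≤ max y 0 := le_max_right y 0
          have h1 : |max y 0 ^ (n+2)| ≤ |y|^(n+2) := by
            rw [abs_of_nonneg (pow_nonneg hmax0 _)]
            exact pow_le_pow_left₀ hmax0 hmax _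
          have heq : ‖(max y 0 ^ (n+2) - 0) / (y - 0)‖ = |max y 0 ^ (n+2)| / |y| := by
            rw [sub_zero, sub_zero, norm_div]; rfl
          rw [heq, div_le_iff₀ (abs_pos.2 hy)]
          calc |max y 0 ^ (n+2)| ≤ |y|^(n+2) := h1
            _ = |y|^(n+1) * |y| := by ring
        have hz : Tendsto (fun y : ℝ => |y| ^ (n+1)) (nhdsWithin 0 {(0:ℝ)}ᶜ) (nhds 0) := by
          have h3 : Tendsto (fun y : ℝ => |y| ^ (n+1)) (nhds 0) (nhds 0) := by
            have h := (continuous_abs.pow (n+1)).tendsto (0:ℝ)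
            convert h using 2 <;> simp [Pi.pow_apply]
          exact h3.mono_left nhdsWithin_le_nhds
        have h4 : Tendsto (slope (fun x : ℝ => max x 0 ^ (n+2)) 0) (nhdsWithin 0 {(0:ℝ)}ᶜ) (nhds 0) := by
          apply squeeze_zero_norm' _ hz
          filter_upwards [self_mem_nhdsWithin] with y hy
          exact key y hy
        simpa using h4
      · have hev : (fun x : ℝ => max x 0 ^ (n+2)) =ᶠ[nhds x] (fun y => y ^ (n+2)) := by
          filter_upwards [Ioi_mem_nhds hx] with y hy
          have : (0:ℝ) < y := hy
          simp [max_eq_left this.le]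
        have h2 := (hasDerivAt_pow (n+2) x).congr_of_eventuallyEq hev
        simpa [max_eq_left hx.le] using h2
    have hcast : ((n+1 : ℕ) : WithTop ℕ∞) = (n : WithTop ℕ∞) + 1 := by push_cast; ring
    rw [hcast, contDiff_succ_iff_deriv]
    refine ⟨fun x => (hd x).differentiableAt, by simp, ?_⟩
    have hdeq : deriv (fun x : ℝ => max x 0 ^ (n+2)) = fun x => (n+2:ℝ) * max x 0 ^ (n+1) := by
      funext x; exact (hd x).deriv
    rw [hdeq]
    exact contDiff_const.mul IH

/-- truncated power -/
noncomputable def Tpow (m : ℕ) (k : ℝ) : ℝ → ℝ := fun x => max (x - k) 0 ^ m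

lemma Tpow_contDiff {m : ℕ} (hm : 1 ≤ m) (k : ℝ) :
    ContDiff ℝ (((m-1 : ℕ)) : WithTop ℕ∞) (Tpow m k) := by
  obtain ⟨n, rfl⟩ := Nat.exists_eq_add_of_le hm
  have h1 := maxpow_contDiff n
  have h2 : ContDiff ℝ (n : WithTop ℕ∞) (fun x : ℝ => x - k) :=
    (contDiff_id.sub contDiff_const)
  have := h1.comp h2
  rw [Nat.add_sub_cancel_left, Nat.add_comm]; exact this

lemma Tpow_of_le {m : ℕ} (hm : 1 ≤ m) {k x : ℝ} (h : x ≤ k) : Tpow m k x = 0 := by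
  rw [Tpow, max_eq_right (by linarith), zero_pow (by omega)]

lemma Tpow_of_ge {m : ℕ} {k x : ℝ} (h : k ≤ x) : Tpow m k x = (x - k)^m := by
  rw [Tpow, max_eq_left (by linarith)]

lemma poly_contDiff (p : Polynomial ℝ) {n : WithTop ℕ∞} :
    ContDiff ℝ n (fun x : ℝ => p.eval x) := by
  have : (fun x : ℝ => p.eval x)
      = fun x : ℝ => ∑ i ∈ Finset.range (p.natDegree + 1), p.coeff i * x ^ i := by
    funext x; exact eval_eq_sum_range x
  rw [this]
  exact ContDiff.sum fun i _ => contDiff_const.mul (contDiff_id.pow i)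

lemma iteratedDerivWithin_congr_set {f : ℝ → ℝ} {s t : Set ℝ} {x : ℝ}
    (h : s =ᶠ[nhds x] t) (n : ℕ) :
    iteratedDerivWithin n f s x = iteratedDerivWithin n f t x := by
  simp only [iteratedDerivWithin_eq_iteratedFDerivWithin,
    iteratedFDerivWithin_congr_set h n]

lemma poly_iteratedDerivWithin (p : Polynomial ℝ) {s : Set ℝ} (hs : UniqueDiffOn ℝ s)
    (n : ℕ) : ∀ x ∈ s, iteratedDerivWithin n (fun y => p.eval y) s x
      = ((Polynomial.derivative (R := ℝ))^[n] p).eval x := by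
  induction n with
  | zero => intro x hx; simp [iteratedDerivWithin_zero]
  | succ n IH =>
    intro x hx
    rw [iteratedDerivWithin_succ]
    have h1 : derivWithin (iteratedDerivWithin n (fun y => p.eval y) s) s x
        = derivWithin (fun y => ((Polynomial.derivative (R := ℝ))^[n] p).eval y) s x :=
      derivWithin_congr IH (IH x hx)
    rw [h1, Polynomial.derivWithin _ (hs.uniqueDiffWithinAt hx),
      Function.iterate_succ_apply']

lemma left_val {f : ℝ → ℝ} {μ i : ℕ} (hi : i ≤ μ) {l c r : ℝ} (hlc : l < c) (hcr : c < r)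
    (hf : ContDiffOn ℝ (μ : WithTop ℕ∞) f (Icc l r)) {p : Polynomial ℝ}
    (hp : ∀ x ∈ Icc l c, f x = p.eval x) :
    iteratedDerivWithin i f (Icc l r) c = ((Polynomial.derivative (R := ℝ))^[i] p).eval c := by
  have hlr : l < r := hlc.trans hcr
  have hud : UniqueDiffOn ℝ (Icc l r) := uniqueDiffOn_Icc hlr
  have hudc : UniqueDiffOn ℝ (Icc l c) := uniqueDiffOn_Icc hlc
  set u := iteratedDerivWithin i f (Icc l r) with hu
  have hcont : ContinuousOn u (Icc l r) :=
    hf.continuousOn_iteratedDerivWithin (by exact_mod_cast hi) hud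
  set g := fun x => ((Polynomial.derivative (R := ℝ))^[i] p).eval x with hg
  have hkey : ∀ x ∈ Ico l c, u x = g x := by
    intro x hx
    have hev : Icc l r =ᶠ[nhds x] Icc l c := by
      rw [Filter.eventuallyEq_set]
      filter_upwards [Iio_mem_nhds hx.2] with y hy
      have hyc : y < c := hy
      constructor
      · rintro ⟨h1, _⟩; exact ⟨h1, hyc.le⟩
      · rintro ⟨h1, h2⟩; exact ⟨h1, h2.trans (by linarith)⟩
    have hx' : x ∈ Icc l c := ⟨hx.1, hx.2.le⟩
    rw [hu, iteratedDerivWithin_congr_set hev i,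
      iteratedDerivWithin_congr hp hx']
    exact poly_iteratedDerivWithin p hudc i x hx'
  haveI hne : (nhdsWithin c (Ico l c)).NeBot := by
    rw [← mem_closure_iff_nhdsWithin_neBot, closure_Ico hlc.ne]
    exact ⟨hlc.le, le_rfl⟩
  have h1 : Tendsto u (nhdsWithin c (Ico l c)) (nhds (u c)) := by
    have := (hcont c ⟨hlc.le, hcr.le⟩).tendsto
    exact this.mono_left (nhdsWithin_mono c (fun y hy => ⟨hy.1, hy.2.le.trans hcr.le⟩))
  have h2 : Tendsto g (nhdsWithin c (Ico l c)) (nhds (u c)) := by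
    apply h1.congr'
    filter_upwards [self_mem_nhdsWithin] with y hy
    exact hkey y hy
  have h3 : Tendsto g (nhdsWithin c (Ico l c)) (nhds (g c)) :=
    ((poly_contDiff _ (n := 0)).continuous.tendsto c).mono_left nhdsWithin_le_nhds
  exact tendsto_nhds_unique h2 h3

lemma right_val {f : ℝ → ℝ} {μ i : ℕ} (hi : i ≤ μ) {l c r : ℝ} (hlc : l < c) (hcr : c < r)
    (hf : ContDiffOn ℝ (μ : WithTop ℕ∞) f (Icc l r)) {q : Polynomial ℝ}
    (hq : ∀ x ∈ Icc c r, f x = q.eval x) :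
    iteratedDerivWithin i f (Icc l r) c = ((Polynomial.derivative (R := ℝ))^[i] q).eval c := by
  have hlr : l < r := hlc.trans hcr
  have hud : UniqueDiffOn ℝ (Icc l r) := uniqueDiffOn_Icc hlr
  have hudc : UniqueDiffOn ℝ (Icc c r) := uniqueDiffOn_Icc hcr
  set u := iteratedDerivWithin i f (Icc l r) with hu
  have hcont : ContinuousOn u (Icc l r) :=
    hf.continuousOn_iteratedDerivWithin (by exact_mod_cast hi) hud
  set g := fun x => ((Polynomial.derivative (R := ℝ))^[i] q).eval x with hg
  have hkey : ∀ x ∈ Ioc c r, u x = g x := by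
    intro x hx
    have hev : Icc l r =ᶠ[nhds x] Icc c r := by
      rw [Filter.eventuallyEq_set]
      filter_upwards [Ioi_mem_nhds hx.1] with y hy
      have hyc : c < y := hy
      constructor
      · rintro ⟨_, h2⟩; exact ⟨hyc.le, h2⟩
      · rintro ⟨h1, h2⟩; exact ⟨(by linarith), h2⟩
    have hx' : x ∈ Icc c r := ⟨hx.1.le, hx.2⟩
    rw [hu, iteratedDerivWithin_congr_set hev i,
      iteratedDerivWithin_congr hq hx']
    exact poly_iteratedDerivWithin q hudc i x hx'
  haveI hne : (nhdsWithin c (Ioc c r)).NeBot := by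
    rw [← mem_closure_iff_nhdsWithin_neBot, closure_Ioc hcr.ne]
    exact ⟨le_rfl, hcr.le⟩
  have h1 : Tendsto u (nhdsWithin c (Ioc c r)) (nhds (u c)) := by
    have := (hcont c ⟨hlc.le, hcr.le⟩).tendsto
    exact this.mono_left (nhdsWithin_mono c (fun y hy => ⟨hlc.le.trans hy.1.le, hy.2⟩))
  have h2 : Tendsto g (nhdsWithin c (Ioc c r)) (nhds (u c)) := by
    apply h1.congr'
    filter_upwards [self_mem_nhdsWithin] with y hy
    exact hkey y hy
  have h3 : Tendsto g (nhdsWithin c (Ioc c r)) (nhds (g c)) :=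
    ((poly_contDiff _ (n := 0)).continuous.tendsto c).mono_left nhdsWithin_le_nhds
  exact tendsto_nhds_unique h2 h3

lemma derivs_match {f : ℝ → ℝ} {μ : ℕ} {l c r : ℝ} (hlc : l < c) (hcr : c < r)
    (hf : ContDiffOn ℝ (μ : WithTop ℕ∞) f (Icc l r)) {p q : Polynomial ℝ}
    (hp : ∀ x ∈ Icc l c, f x = p.eval x) (hq : ∀ x ∈ Icc c r, f x = q.eval x)
    {i : ℕ} (hi : i ≤ μ) :
    ((Polynomial.derivative (R := ℝ))^[i] p).eval c
      = ((Polynomial.derivative (R := ℝ))^[i] q).eval c :=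
  (left_val hi hlc hcr hf hp).symm.trans (right_val hi hlc hcr hf hq)

lemma poly_eq_of_eqOn_Icc {p q : Polynomial ℝ} {a b : ℝ} (hab : a < b)
    (h : ∀ x ∈ Icc a b, p.eval x = q.eval x) : p = q := by
  have hz : p - q = 0 := by
    apply Polynomial.eq_zero_of_infinite_isRoot
    apply Set.Infinite.mono _ (Set.Icc_infinite hab)
    intro x hx
    simp only [mem_setOf_eq, IsRoot.def, eval_sub, sub_eq_zero]
    exact h x hx
  linear_combination hz

lemma taylor_factor {r : Polynomial ℝ} {m : ℕ} (M : ℝ) (hdeg : r.natDegree ≤ m)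
    (h : ∀ i < m, ((Polynomial.derivative (R := ℝ))^[i] r).eval M = 0) :
    ∃ e : ℝ, r = C e * (X - C M)^m := by
  set e := (taylor M r).coeff m with he
  refine ⟨e, ?_⟩
  have hcoeff : ∀ i < m, (taylor M r).coeff i = 0 := by
    intro i hi
    rw [Polynomial.taylor_coeff]
    have hfact := congrFun (Polynomial.factorial_smul_hasseDeriv (R := ℝ) (k := i)) r
    have h4 : (Nat.factorial i) • (Polynomial.hasseDeriv i r) = (Polynomial.derivative (R := ℝ))^[i] r := by
      rw [← hfact]; simp
    have h2 : (Nat.factorial i : ℝ) * (Polynomial.hasseDeriv i r).eval M = 0 := by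
      have h5 : Polynomial.eval M ((Nat.factorial i : ℝ[X]) * Polynomial.hasseDeriv i r) = 0 := by
        rw [← nsmul_eq_mul, h4]; exact h i hi
      rw [Polynomial.eval_mul, Polynomial.eval_natCast] at h5
      exact h5
    have hfactne : (Nat.factorial i : ℝ) ≠ 0 := by
      exact_mod_cast (Nat.factorial_ne_zero i)
    exact (mul_eq_zero.1 h2).resolve_left hfactne
  have hT : taylor M r = C e * X^m := by
    ext n
    rcases lt_trichotomy n m with hn | hn | hn
    · rw [hcoeff n hn, Polynomial.coeff_C_mul, Polynomial.coeff_X_pow,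
        if_neg hn.ne, mul_zero]
    · subst hn; rw [Polynomial.coeff_C_mul, Polynomial.coeff_X_pow, if_pos rfl, mul_one, he]
    · have h1 : (taylor M r).coeff n = 0 := by
        apply Polynomial.coeff_eq_zero_of_natDegree_lt
        rw [Polynomial.natDegree_taylor]; omega
      rw [h1, Polynomial.coeff_C_mul, Polynomial.coeff_X_pow, if_neg hn.ne', mul_zero]
  have hcomp : (taylor M r).comp (X - C M) = r := by
    rw [Polynomial.taylor_apply, Polynomial.comp_assoc]
    simp
  rw [← hcomp, hT, Polynomial.mul_comp, Polynomial.C_comp, Polynomial.pow_comp,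
    Polynomial.X_comp]

lemma vandermonde_span {m : ℕ} (t : Fin (m+1) → ℝ) (ht : Function.Injective t)
    (d : Polynomial ℝ) (hd : d.natDegree ≤ m) :
    ∃ c : Fin (m+1) → ℝ, ∑ i, C (c i) * (X - C (t i))^m = d := by
  set s : Fin (m+1) → ℝ := fun i => - t i with hs
  have hsinj : Function.Injective s := fun i j h => ht (by simpa [hs] using h)
  set B : Matrix (Fin (m+1)) (Fin (m+1)) ℝ := fun j i => s i ^ (j : ℕ) with hB
  have hdet : B.det ≠ 0 := by
    have hBt : B = (Matrix.vandermonde s).transpose := by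
      ext j i; rw [Matrix.transpose_apply, Matrix.vandermonde_apply]
    rw [hBt, Matrix.det_transpose, Matrix.det_vandermonde]
    apply Finset.prod_ne_zero_iff.2
    intro i _
    apply Finset.prod_ne_zero_iff.2
    intro j hj
    have hij : i < j := Finset.mem_Ioi.1 hj
    exact sub_ne_zero.2 (fun hc => hij.ne' (hsinj hc))
  set b : Fin (m+1) → ℝ := fun j => d.coeff (m - (j:ℕ)) / (m.choose (m - (j:ℕ))) with hb
  have hunit : IsUnit B.det := isUnit_iff_ne_zero.2 hdet
  refine ⟨B⁻¹.mulVec b, ?_⟩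
  have hBb : B.mulVec (B⁻¹.mulVec b) = b := by
    rw [Matrix.mulVec_mulVec, Matrix.mul_nonsing_inv _ hunit, Matrix.one_mulVec]
  set c := B⁻¹.mulVec b with hc
  ext n
  rw [Polynomial.finset_sum_coeff]
  have hterm : ∀ i : Fin (m+1), (C (c i) * (X - C (t i))^m).coeff n
      = c i * (s i ^ (m - n) * (m.choose n : ℝ)) := by
    intro i
    rw [Polynomial.coeff_C_mul]
    have hX : (X - C (t i)) = (X + C (s i)) := by simp [hs, sub_eq_add_neg]
    rw [hX, Polynomial.coeff_X_add_C_pow]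
  rw [Finset.sum_congr rfl (fun i _ => hterm i)]
  rcases le_or_gt n m with hn | hn
  · set j : Fin (m+1) := ⟨m - n, by omega⟩ with hjj
    have hrow := congrFun hBb j
    rw [Matrix.mulVec, dotProduct] at hrow
    have hmn : m - (j : ℕ) = n := by simp only [hjj]; omega
    have hchoosene : (m.choose n : ℝ) ≠ 0 := by
      exact_mod_cast (Nat.choose_pos hn).ne'
    calc ∑ i, c i * (s i ^ (m - n) * (m.choose n : ℝ))
        = (∑ i, B j i * c i) * (m.choose n : ℝ) := by
          rw [Finset.sum_mul]; apply Finset.sum_congr rfl; intro i _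
          simp only [hB, hjj]; ring
      _ = b j * (m.choose n : ℝ) := by rw [hrow]
      _ = d.coeff n := by
          rw [hb]; simp only [hmn]
          exact div_mul_cancel₀ _ hchoosene
  · have h1 : ∀ i : Fin (m+1), c i * (s i ^ (m - n) * (m.choose n : ℝ)) = 0 := by
      intro i
      rw [Nat.choose_eq_zero_of_lt hn]
      simp
    rw [Finset.sum_congr rfl (fun i _ => h1 i), Finset.sum_const_zero]
    exact (Polynomial.coeff_eq_zero_of_natDegree_lt (lt_of_le_of_lt hd hn)).symm

lemma cellU1_mono {S T : Finset ℤ} (h : S ⊆ T) : cellU1 S ⊆ cellU1 T := by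
  intro x hx
  simp only [cellU1, Set.mem_iUnion] at hx ⊢
  obtain ⟨k, hk, hxk⟩ := hx
  exact ⟨k, h hk, hxk⟩

lemma mem_cellU1 {S : Finset ℤ} {x : ℝ} :
    x ∈ cellU1 S ↔ ∃ k ∈ S, x ∈ Icc (k:ℝ) (k+1) := by
  simp only [cellU1, Set.mem_iUnion]
  tauto

lemma cellU1_le {S : Finset ℤ} {M : ℤ} (h : ∀ k ∈ S, k ≤ M) :
    ∀ x ∈ cellU1 S, x ≤ (M:ℝ) + 1 := by
  intro x hx
  obtain ⟨k, hk, hxk⟩ := mem_cellU1.1 hx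
  have h2 : (k:ℝ) ≤ (M:ℝ) := Int.cast_le.2 (h k hk)
  linarith [hxk.2]

lemma natDegree_term_le (e a : ℝ) (m : ℕ) : (C e * (X - C a)^m).natDegree ≤ m := by
  refine le_trans (natDegree_C_mul_le _ _) ?_
  rw [natDegree_pow, natDegree_X_sub_C, mul_one]


lemma key (m : ℕ) (hm : 1 ≤ m) :
    ∀ (n : ℕ) (S : Finset ℤ), S.card = n →
    Adm1 ((m:ℤ)-1) (S : Set ℤ) →
    ∀ f : ℝ → ℝ, ContDiffOn ℝ ((m-1 : ℕ) : WithTop ℕ∞) f (cellU1 S) →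
    (∀ k ∈ S, ∃ p : Polynomial ℝ, p.natDegree ≤ m ∧
      ∀ x ∈ Icc (k:ℝ) (k+1), f x = p.eval x) →
    ∃ F : ℝ → ℝ, ContDiff ℝ ((m-1:ℕ) : WithTop ℕ∞) F ∧
      (∀ j : ℤ, ∃ r : Polynomial ℝ, r.natDegree ≤ m ∧
        ∀ x ∈ Icc (j:ℝ) (j+1), F x = r.eval x) ∧
      Set.EqOn F f (cellU1 S) := by
  intro n
  induction n with
  | zero =>
    intro S hcard _ f _ _
    have hS : S = ∅ := Finset.card_eq_zero.1 hcard
    refine ⟨fun _ => 0, contDiff_const, fun j => ⟨0, by simp, by simp⟩, ?_⟩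
    subst hS
    intro x hx
    rw [mem_cellU1] at hx
    obtain ⟨k, hk, _⟩ := hx
    exact absurd hk (Finset.notMem_empty k)
  | succ n IH =>
    intro S hcard hadm f hsm hpoly
    have hne : S.Nonempty := Finset.card_pos.1 (by omega)
    set M := S.max' hne with hM
    have hMS : M ∈ S := S.max'_mem hne
    set S' := S.erase M with hS'
    have hcard' : S'.card = n := by
      rw [hS', Finset.card_erase_of_mem hMS, hcard]
      omega
    have hSsub : S' ⊆ S := Finset.erase_subset _ _
    have hadm' : Adm1 ((m:ℤ)-1) (S' : Set ℤ) := by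
      intro a b ha hb hab hmid
      simp only [hS', Finset.coe_erase, Set.mem_diff] at ha hb
      refine hadm a b ha.1 hb.1 hab ?_
      intro c h1 h2 hcS
      have hbM : b ≤ M := S.le_max' b hb.1
      have hcM : c ≠ M := by omega
      refine hmid c h1 h2 ?_
      simp only [hS', Finset.coe_erase, Set.mem_diff]
      exact ⟨hcS, by simpa using hcM⟩
    obtain ⟨F, hFsm, hFcell, hFeq⟩ := IH S' hcard' hadm' f
      (hsm.mono (cellU1_mono hSsub)) (fun k hk => hpoly k (hSsub hk))
    obtain ⟨q, hqdeg, hq⟩ := hpoly M hMS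
    obtain ⟨r', hr'deg, hr'⟩ := hFcell M
    have hS'le : ∀ k ∈ S', k ≤ M - 1 := by
      intro k hk
      have h1 : k ≤ M := S.le_max' k (hSsub hk)
      have h2 : k ≠ M := (Finset.mem_erase.1 hk).1
      omega
    have hcellS'le : ∀ x ∈ cellU1 S', x ≤ (M:ℝ) := by
      intro x hx
      have := cellU1_le hS'le x hx
      push_cast at this
      linarith
    have hcelldecomp : cellU1 S = cellU1 S' ∪ Icc (M:ℝ) ((M:ℝ)+1) := by
      have hins : S = insert M S' := (Finset.insert_erase hMS).symm
      rw [hins]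
      unfold cellU1
      rw [Finset.set_biUnion_insert]
      rw [Set.union_comm]
    by_cases hMm1 : (M - 1) ∈ S
    · -- Case A: adjacent cell on the left
      have hM1S' : M - 1 ∈ S' := Finset.mem_erase.2 ⟨by omega, hMm1⟩
      obtain ⟨p₁, hp₁deg, hp₁⟩ := hpoly (M-1) hMm1
      have hcast : ((M-1 : ℤ):ℝ) = (M:ℝ) - 1 := by push_cast; ring
      have hp₁' : ∀ x ∈ Icc ((M:ℝ)-1) (M:ℝ), f x = p₁.eval x := by
        intro x hx
        apply hp₁
        rw [hcast]
        constructor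
        · exact hx.1
        · linarith [hx.2]
      have hq' : ∀ x ∈ Icc (M:ℝ) ((M:ℝ)+1), f x = q.eval x := fun x hx => hq x hx
      have hsubcell : Icc ((M:ℝ)-1) ((M:ℝ)+1) ⊆ cellU1 S := by
        intro x hx
        rcases le_total x (M:ℝ) with h | h
        · rw [mem_cellU1]
          exact ⟨M-1, hMm1, by rw [hcast]; exact ⟨hx.1, by linarith⟩⟩
        · rw [mem_cellU1]
          exact ⟨M, hMS, ⟨h, hx.2⟩⟩
      have hfon : ContDiffOn ℝ ((m-1:ℕ) : WithTop ℕ∞) f (Icc ((M:ℝ)-1) ((M:ℝ)+1)) :=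
        hsm.mono hsubcell
      have h1 : ∀ i ≤ m-1, ((Polynomial.derivative (R := ℝ))^[i] p₁).eval (M:ℝ)
          = ((Polynomial.derivative (R := ℝ))^[i] q).eval (M:ℝ) := by
        intro i hi
        exact derivs_match (by linarith) (by linarith) hfon hp₁' hq' hi
      obtain ⟨r'', hr''deg, hr''⟩ := hFcell (M-1)
      have hr''' : ∀ x ∈ Icc ((M:ℝ)-1) (M:ℝ), F x = r''.eval x := by
        intro x hx
        apply hr''
        rw [hcast]
        exact ⟨hx.1, by linarith [hx.2]⟩
      have hFon : ContDiffOn ℝ ((m-1:ℕ) : WithTop ℕ∞) F (Icc ((M:ℝ)-1) ((M:ℝ)+1)) :=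
        hFsm.contDiffOn
      have h2 : ∀ i ≤ m-1, ((Polynomial.derivative (R := ℝ))^[i] r'').eval (M:ℝ)
          = ((Polynomial.derivative (R := ℝ))^[i] r').eval (M:ℝ) := by
        intro i hi
        exact derivs_match (by linarith) (by linarith) hFon hr''' hr' hi
      have h3 : p₁ = r'' := by
        apply poly_eq_of_eqOn_Icc (show (M:ℝ)-1 < (M:ℝ) by linarith)
        intro x hx
        rw [← hp₁' x hx, ← hr''' x hx]
        refine (hFeq ?_).symm
        rw [mem_cellU1]
        exact ⟨M-1, hM1S', by rw [hcast]; exact ⟨hx.1, by linarith [hx.2]⟩⟩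
      have hvanish : ∀ i < m, ((Polynomial.derivative (R := ℝ))^[i] (q - r')).eval (M:ℝ) = 0 := by
        intro i hi
        rw [Polynomial.iterate_derivative_sub, Polynomial.eval_sub]
        have hi' : i ≤ m - 1 := by omega
        rw [← h1 i hi', h3, h2 i hi', sub_self]
      obtain ⟨e, he⟩ := taylor_factor (M:ℝ)
        (le_trans (natDegree_sub_le _ _) (max_le hqdeg hr'deg)) hvanish
      refine ⟨fun x => F x + e * Tpow m (M:ℝ) x,
        hFsm.add (contDiff_const.mul (Tpow_contDiff hm _)), ?_, ?_⟩
      · intro j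
        obtain ⟨rj, hrjdeg, hrj⟩ := hFcell j
        by_cases hMj : M ≤ j
        · refine ⟨rj + C e * (X - C (M:ℝ))^m,
            le_trans (natDegree_add_le _ _) (max_le hrjdeg (natDegree_term_le _ _ _)), ?_⟩
          intro x hx
          show F x + e * Tpow m (M:ℝ) x = _
          have hMx : (M:ℝ) ≤ x := le_trans (Int.cast_le.2 hMj) hx.1
          rw [Polynomial.eval_add, ← hrj x hx, Tpow_of_ge hMx]
          simp [Polynomial.eval_mul, Polynomial.eval_pow]
        · refine ⟨rj, hrjdeg, ?_⟩
          intro x hx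
          show F x + e * Tpow m (M:ℝ) x = eval x rj
          have hxM : x ≤ (M:ℝ) := by
            have : (j:ℝ) + 1 ≤ (M:ℝ) := by
              have : j + 1 ≤ M := by omega
              exact_mod_cast this
            linarith [hx.2]
          rw [Tpow_of_le hm hxM, mul_zero, add_zero]
          exact hrj x hx
      · rw [hcelldecomp]
        intro x hx
        rcases hx with hx | hx
        · show F x + e * Tpow m (M:ℝ) x = f x
          rw [Tpow_of_le hm (hcellS'le x hx), mul_zero, add_zero]
          exact hFeq hx
        · show F x + e * Tpow m (M:ℝ) x = f x
          have hqval : q.eval x = r'.eval x + e * (x - (M:ℝ))^m := by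
            have := congrArg (Polynomial.eval x) he
            rw [Polynomial.eval_sub, Polynomial.eval_mul, Polynomial.eval_pow,
              Polynomial.eval_sub, Polynomial.eval_X, Polynomial.eval_C,
              Polynomial.eval_C] at this
            linarith
          rw [Tpow_of_ge hx.1, hr' x hx, hq' x hx, hqval]
    · -- Case B: gap on the left
      by_cases hS'emp : S' = ∅
      · refine ⟨fun x => q.eval x, poly_contDiff q,
          fun j => ⟨q, hqdeg, fun x _ => rfl⟩, ?_⟩
        rw [hcelldecomp, hS'emp]
        intro x hx
        rcases hx with hx | hx
        · rw [mem_cellU1] at hx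
          obtain ⟨k, hk, _⟩ := hx
          exact absurd hk (Finset.notMem_empty k)
        · exact (hq x hx).symm
      · have hS'ne : S'.Nonempty := Finset.nonempty_iff_ne_empty.2 hS'emp
        set M'' := S'.max' hS'ne with hM''
        have hM''S' : M'' ∈ S' := S'.max'_mem hS'ne
        have hM''S : M'' ∈ S := hSsub hM''S'
        have hM''lt : M'' < M := by
          have h1 : M'' ≤ M := S.le_max' _ hM''S
          have h2 : M'' ≠ M := (Finset.mem_erase.1 hM''S').1
          omega
        have hgap : (m:ℤ) ≤ M - M'' - 1 := by
          have hmid : ∀ c : ℤ, M'' < c → c < M → c ∉ (S : Set ℤ) := by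
            intro c h1 h2 hc
            have hcS' : c ∈ S' := Finset.mem_erase.2 ⟨by omega, hc⟩
            have := S'.le_max' c hcS'
            omega
          rcases hadm M'' M hM''S hMS hM''lt hmid with h | h
          · exfalso; apply hMm1; have : M - 1 = M'' := by omega
            rw [this]; exact hM''S
          · omega
        have hinj : Function.Injective (fun i : Fin (m+1) => ((M'' + 1 + (i:ℕ) : ℤ) : ℝ)) := by
          intro i j hij
          simp only at hij
          have : (M'' + 1 + (i:ℕ) : ℤ) = (M'' + 1 + (j:ℕ) : ℤ) := by exact_mod_cast hij
          have : (i:ℕ) = (j:ℕ) := by omega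
          exact Fin.ext this
        obtain ⟨c, hcsum⟩ := vandermonde_span _ hinj (q - r')
          (le_trans (natDegree_sub_le _ _) (max_le hqdeg hr'deg))
        have hknotle : ∀ i : Fin (m+1), ((M'' + 1 + (i:ℕ) : ℤ) : ℝ) ≤ (M:ℝ) := by
          intro i
          have h1 : (M'' + 1 + (i:ℕ) : ℤ) ≤ M := by
            have := i.isLt
            omega
          exact_mod_cast h1
        have hknotge : ∀ i : Fin (m+1), ((M'':ℝ) + 1) ≤ ((M'' + 1 + (i:ℕ) : ℤ) : ℝ) := by
          intro i
          have h1 : (M'' + 1 : ℤ) ≤ M'' + 1 + (i:ℕ) := by omega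
          have h2 : ((M'' + 1 : ℤ) : ℝ) ≤ ((M'' + 1 + (i:ℕ) : ℤ) : ℝ) := Int.cast_le.2 h1
          push_cast at h2 ⊢
          linarith
        refine ⟨fun x => F x + ∑ i : Fin (m+1), c i * Tpow m ((M'' + 1 + (i:ℕ) : ℤ) : ℝ) x,
          hFsm.add (ContDiff.sum fun i _ => contDiff_const.mul (Tpow_contDiff hm _)), ?_, ?_⟩
        · intro j
          obtain ⟨rj, hrjdeg, hrj⟩ := hFcell j
          refine ⟨rj + ∑ i : Fin (m+1), if (M'' + 1 + (i:ℕ) : ℤ) ≤ j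
              then C (c i) * (X - C ((M'' + 1 + (i:ℕ) : ℤ) : ℝ))^m else 0, ?_, ?_⟩
          · refine le_trans (natDegree_add_le _ _) (max_le hrjdeg ?_)
            apply natDegree_sum_le_of_forall_le
            intro i _
            split_ifs
            · exact natDegree_term_le _ _ _
            · simp
          · intro x hx
            show F x + ∑ i : Fin (m+1), c i * Tpow m ((M'' + 1 + (i:ℕ) : ℤ) : ℝ) x = _
            rw [Polynomial.eval_add, Polynomial.eval_finset_sum, ← hrj x hx]
            congr 1
            apply Finset.sum_congr rfl
            intro i _
            split_ifs with hij
            · have hklex : ((M'' + 1 + (i:ℕ) : ℤ) : ℝ) ≤ x :=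
                le_trans (Int.cast_le.2 hij) hx.1
              rw [Tpow_of_ge hklex]
              simp [Polynomial.eval_mul, Polynomial.eval_pow]
            · have hxlek : x ≤ ((M'' + 1 + (i:ℕ) : ℤ) : ℝ) := by
                have h1 : j + 1 ≤ (M'' + 1 + (i:ℕ) : ℤ) := by omega
                have h2 : ((j + 1 : ℤ) : ℝ) ≤ ((M'' + 1 + (i:ℕ) : ℤ) : ℝ) := Int.cast_le.2 h1
                push_cast at h2 ⊢
                linarith [hx.2]
              rw [Tpow_of_le hm hxlek]
              simp
        · rw [hcelldecomp]
          intro x hx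
          rcases hx with hx | hx
          · show F x + ∑ i : Fin (m+1), c i * Tpow m ((M'' + 1 + (i:ℕ) : ℤ) : ℝ) x = f x
            have hxle : x ≤ (M'':ℝ) + 1 :=
              cellU1_le (fun k hk => S'.le_max' k hk) x hx
            have hz : ∀ i : Fin (m+1), c i * Tpow m ((M'' + 1 + (i:ℕ) : ℤ) : ℝ) x = 0 := by
              intro i
              rw [Tpow_of_le hm (le_trans hxle (hknotge i)), mul_zero]
            rw [Finset.sum_congr rfl (fun i _ => hz i), Finset.sum_const_zero, add_zero]
            exact hFeq hx
          · show F x + ∑ i : Fin (m+1), c i * Tpow m ((M'' + 1 + (i:ℕ) : ℤ) : ℝ) x = f x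
            have hsum : ∑ i : Fin (m+1), c i * Tpow m ((M'' + 1 + (i:ℕ) : ℤ) : ℝ) x
                = q.eval x - r'.eval x := by
              have := congrArg (Polynomial.eval x) hcsum
              rw [Polynomial.eval_finset_sum, Polynomial.eval_sub] at this
              rw [← this]
              apply Finset.sum_congr rfl
              intro i _
              rw [Tpow_of_ge (le_trans (hknotle i) hx.1)]
              simp [Polynomial.eval_mul, Polynomial.eval_pow]
            rw [hsum, ← hr' x hx, hq x hx]
            ring

/-- One-dimensional spline extension: for `Ω ∈ A¹_{m−1}`, every `C^{m−1}` piecewise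
polynomial of degree `m` on `Ω` extends to a global `C^{m−1}` spline of degree `m`
on `ℝ` with respect to the full integer grid. -/
theorem stmt14 (m : ℕ) (hm : 1 ≤ m) (S : Finset ℤ)
    (hadm : Adm1 ((m : ℤ) - 1) (↑S : Set ℤ))
    (f : ℝ → ℝ) (hsm : ContDiffOn ℝ (↑(m - 1) : ℕ∞) f (cellU1 S))
    (hpoly : ∀ k ∈ S, ∃ p : Polynomial ℝ, p.natDegree ≤ m ∧
      ∀ x ∈ Set.Icc (k : ℝ) (k + 1), f x = p.eval x) :
    ∃ F : ℝ → ℝ, ContDiff ℝ (↑(m - 1) : ℕ∞) F ∧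
      (∀ k : ℤ, ∃ p : Polynomial ℝ, p.natDegree ≤ m ∧
        ∀ x ∈ Set.Icc (k : ℝ) (k + 1), F x = p.eval x) ∧
      Set.EqOn F f (cellU1 S) := by
  have hsm' : ContDiffOn ℝ ((m-1 : ℕ) : WithTop ℕ∞) f (cellU1 S) := by
    exact_mod_cast hsm
  obtain ⟨F, h1, h2, h3⟩ := key m hm S.card S rfl hadm f hsm' hpoly
  refine ⟨F, ?_, h2, h3⟩
  exact_mod_cast h1
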